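/- Let α ∈ (0,1), β = 1−α, f > 0, r ∈ [0,1], ρ ∈ [0,1], v > 0, R_t > 0, with αβρ < 1. Let (X_i)_{i≥1} be i.i.d. with P(X_i = 1) = α, P(X_i = 0) = β, define K_i = 1 if (X_i, X_{i+1}) = (0,1) and K_i = 0 otherwise, and let (Y_i)_{i≥1} be i.i.d. exponential random variables with rate f, independent of (X_i). For m ≥ 2 define u_m = [ Σ_{i=1}^{m−1} ( α v Y_i R_t − (1−r) ρ v K_i Y_i R_t ) ] / [ Σ_{i=1}^{m−1} ( v Y_i R_t − ρ v K_i Y_i R_t ) ]. Then u_m converges almost surely to (α − (1−r) α β ρ) / (1 − α β ρ) as m → ∞. -/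

import Mathlib

open MeasureTheory ProbabilityTheory Finset Filter
open Real Set Topology

lemma aux_exp_Iio (f : ℝ) : expMeasure f (Set.Iio 0) = 0 := by
  rw [expMeasure, gammaMeasure, withDensity_apply _ measurableSet_Iio]
  exact lintegral_gammaPDF_of_nonpos le_rfl

lemma aux_exp_ae_nonneg (f : ℝ) : ∀ᵐ x ∂(expMeasure f), 0 ≤ x := by
  rw [ae_iff]
  have h : {x : ℝ | ¬ 0 ≤ x} = Set.Iio 0 := by ext x; simp
  rw [h]; exact aux_exp_Iio f

lemma aux_integrable_aux (f : ℝ) (hf : 0 < f) :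
    Integrable (fun x : ℝ => if 0 ≤ x then f * Real.exp (-(f * x)) * x else 0) := by
  have h1 : IntegrableOn (fun x : ℝ => x * Real.exp (-f * x)) (Set.Ioi 0) := by
    have := integrableOn_rpow_mul_exp_neg_mul_rpow (p := 1) (s := 1) (b := f)
      (by norm_num) (by norm_num) hf
    simpa [Real.rpow_one] using this
  have h2 : IntegrableOn (fun x : ℝ => f * Real.exp (-(f * x)) * x) (Set.Ici 0) := by
    rw [integrableOn_Ici_iff_integrableOn_Ioi]
    have h3 : IntegrableOn (fun x : ℝ => f * (x * Real.exp (-f * x))) (Set.Ioi 0) :=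
      h1.const_mul f
    exact h3.congr_fun (fun x _ => by ring_nf) measurableSet_Ioi
  have : (fun x : ℝ => if 0 ≤ x then f * Real.exp (-(f * x)) * x else 0)
      = Set.indicator (Set.Ici 0) (fun x : ℝ => f * Real.exp (-(f * x)) * x) := by
    funext x; simp [Set.indicator_apply]
  rw [this]
  exact h2.integrable_indicator measurableSet_Ici

lemma aux_integral_aux (f : ℝ) (hf : 0 < f) :
    ∫ x : ℝ, (if 0 ≤ x then f * Real.exp (-(f * x)) * x else 0) = 1 / f := by
  have h : (fun x : ℝ => if 0 ≤ x then f * Real.exp (-(f * x)) * x else 0)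
      = Set.indicator (Set.Ici 0) (fun x : ℝ => f * Real.exp (-(f * x)) * x) := by
    funext x; simp [Set.indicator_apply]
  rw [h, integral_indicator measurableSet_Ici, integral_Ici_eq_integral_Ioi]
  have h2 : ∀ x ∈ Set.Ioi (0:ℝ), f * Real.exp (-(f * x)) * x
      = f * (x ^ ((2:ℝ) - 1) * Real.exp (-(f * x))) := by
    intro x _; rw [show (2:ℝ) - 1 = 1 by norm_num, Real.rpow_one]; ring
  rw [setIntegral_congr_fun measurableSet_Ioi h2, integral_const_mul,
    integral_rpow_mul_exp_neg_mul_Ioi (by norm_num) hf, Real.Gamma_two]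
  rw [show ((1:ℝ)/f) ^ (2:ℝ) = (1/f)^(2:ℕ) by rw [← Real.rpow_natCast]; norm_num]
  field_simp

lemma aux_exp_lintegral (f : ℝ) (hf : 0 < f) :
    ∫⁻ x, ENNReal.ofReal x ∂(expMeasure f) = ENNReal.ofReal (1 / f) := by
  rw [expMeasure, gammaMeasure, lintegral_withDensity_eq_lintegral_mul _
    (show Measurable (gammaPDF 1 f) from (measurable_gammaPDFReal 1 f).ennreal_ofReal)
    ENNReal.measurable_ofReal]
  have h : (fun x : ℝ => gammaPDF 1 f x * ENNReal.ofReal x)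
      = fun x : ℝ => ENNReal.ofReal (if 0 ≤ x then f * Real.exp (-(f * x)) * x else 0) := by
    funext x
    by_cases hx : 0 ≤ x
    · rw [show gammaPDF 1 f x = exponentialPDF f x from rfl, exponentialPDF_of_nonneg hx,
        if_pos hx, ← ENNReal.ofReal_mul (mul_nonneg hf.le (Real.exp_pos _).le)]
    · rw [show gammaPDF 1 f x = exponentialPDF f x from rfl,
        exponentialPDF_of_neg (lt_of_not_ge hx), if_neg hx, ENNReal.ofReal_zero, zero_mul]
  rw [show (gammaPDF 1 f * fun x => ENNReal.ofReal x)
      = fun x : ℝ => gammaPDF 1 f x * ENNReal.ofReal x from rfl, h,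
    ← ofReal_integral_eq_lintegral_ofReal (aux_integrable_aux f hf)
      (Filter.Eventually.of_forall fun x => by
        by_cases h : (0:ℝ) ≤ x
        · simp only [Pi.zero_apply, if_pos h]; positivity
        · simp only [Pi.zero_apply, if_neg h]; exact le_rfl), aux_integral_aux f hf]

lemma aux_exp_integrable (f : ℝ) (hf : 0 < f) : Integrable (fun x : ℝ => x) (expMeasure f) := by
  refine ⟨measurable_id.aestronglyMeasurable, ?_⟩
  rw [hasFiniteIntegral_iff_ofReal (aux_exp_ae_nonneg f)]
  rw [aux_exp_lintegral f hf]
  exact ENNReal.ofReal_lt_top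

lemma aux_exp_integral (f : ℝ) (hf : 0 < f) : ∫ x, x ∂(expMeasure f) = 1 / f := by
  rw [integral_eq_lintegral_of_nonneg_ae (aux_exp_ae_nonneg f)
    measurable_id.aestronglyMeasurable, aux_exp_lintegral f hf,
    ENNReal.toReal_ofReal (by positivity)]

lemma aux_bernoulli_law {Ω : Type*} [MeasurableSpace Ω] (P : Measure Ω) [IsProbabilityMeasure P]
    (α β : ℝ) (hα : 0 ≤ α) (hβ : 0 ≤ β) (hab : α + β = 1) (X : Ω → ℝ) (hX : Measurable X)
    (h1 : P {ω | X ω = 1} = ENNReal.ofReal α) (h0 : P {ω | X ω = 0} = ENNReal.ofReal β) :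
    P.map X = ENNReal.ofReal β • Measure.dirac (0:ℝ) + ENNReal.ofReal α • Measure.dirac (1:ℝ) := by
  classical
  set A : Set Ω := {ω | X ω = 0} with hA
  set B : Set Ω := {ω | X ω = 1} with hB
  have hAmeas : MeasurableSet A := hX (measurableSet_singleton 0)
  have hBmeas : MeasurableSet B := hX (measurableSet_singleton 1)
  have hdisj : Disjoint A B := by
    rw [Set.disjoint_left]
    intro ω hω0 hω1
    simp only [hA, hB, Set.mem_setOf_eq] at hω0 hω1
    rw [hω0] at hω1; norm_num at hω1
  have hunion : P (A ∪ B) = 1 := by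
    rw [measure_union hdisj hBmeas, h0, h1, ← ENNReal.ofReal_add hβ hα]
    rw [show β + α = 1 by linarith]
    simp
  have hcompl : P ((A ∪ B)ᶜ) = 0 := by
    rw [measure_compl (hAmeas.union hBmeas) (measure_ne_top _ _), hunion, measure_univ]
    simp
  refine Measure.ext fun s hs => ?_
  rw [Measure.map_apply hX hs]
  have key : P (X ⁻¹' s) = P ((X ⁻¹' s) ∩ (A ∪ B)) := by
    have h := measure_inter_add_diff (μ := P) (X ⁻¹' s) (hAmeas.union hBmeas)
    have hdiff : P (X ⁻¹' s \ (A ∪ B)) = 0 :=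
      measure_mono_null (fun x hx => hx.2) hcompl
    rw [← h, hdiff, add_zero]
  rw [key, Set.inter_union_distrib_left,
    measure_union (hdisj.mono Set.inter_subset_right Set.inter_subset_right)
      ((hX hs).inter hBmeas)]
  have hA' : X ⁻¹' s ∩ A = if (0:ℝ) ∈ s then A else ∅ := by
    split_ifs with hmem
    · ext ω
      refine ⟨fun h => h.2, fun h => ⟨?_, h⟩⟩
      have : X ω = 0 := h
      rw [Set.mem_preimage, this]; exact hmem
    · ext ω
      refine ⟨fun h => ?_, fun h => absurd h (Set.notMem_empty ω)⟩
      have h2 : X ω = 0 := h.2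
      exact hmem (by have h1' := h.1; rwa [Set.mem_preimage, h2] at h1')
  have hB' : X ⁻¹' s ∩ B = if (1:ℝ) ∈ s then B else ∅ := by
    split_ifs with hmem
    · ext ω
      refine ⟨fun h => h.2, fun h => ⟨?_, h⟩⟩
      have : X ω = 1 := h
      rw [Set.mem_preimage, this]; exact hmem
    · ext ω
      refine ⟨fun h => ?_, fun h => absurd h (Set.notMem_empty ω)⟩
      have h2 : X ω = 1 := h.2
      exact hmem (by have h1' := h.1; rwa [Set.mem_preimage, h2] at h1')
  rw [hA', hB']
  simp only [Measure.add_apply, Measure.smul_apply, Measure.dirac_apply' _ hs, smul_eq_mul,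
    Set.indicator_apply, Set.mem_setOf_eq, Pi.one_apply]
  by_cases h0s : (0:ℝ) ∈ s <;> by_cases h1s : (1:ℝ) ∈ s <;>
    simp [h0s, h1s, h0, h1, add_comm]

lemma aux_halfdiv (c : ℕ) (hc : c ≤ 1) :
    Tendsto (fun n : ℕ => (((n + c) / 2 : ℕ) : ℝ) / n) atTop (𝓝 (1 / 2)) := by
  have hg : Tendsto (fun n : ℕ => 1 / 2 - 1 / (n : ℝ)) atTop (𝓝 (1 / 2)) := by
    have := tendsto_const_nhds (x := (1:ℝ)/2) (f := atTop (α := ℕ))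
    simpa using this.sub tendsto_one_div_atTop_nhds_zero_nat
  have hh : Tendsto (fun n : ℕ => 1 / 2 + 1 / (n : ℝ)) atTop (𝓝 (1 / 2)) := by
    have := tendsto_const_nhds (x := (1:ℝ)/2) (f := atTop (α := ℕ))
    simpa using this.add tendsto_one_div_atTop_nhds_zero_nat
  refine tendsto_of_tendsto_of_tendsto_of_le_of_le' hg hh ?_ ?_
  · filter_upwards [eventually_ge_atTop 1] with n hn
    have hn' : (0:ℝ) < n := by exact_mod_cast hn
    rw [sub_le_iff_le_add, div_add_div _ _ (ne_of_gt hn') (ne_of_gt hn'),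
      div_le_div_iff₀ (by positivity) (by positivity)]
    have hnat : n ≤ 2 * ((n + c) / 2) + 2 := by omega
    have : (n : ℝ) ≤ 2 * (((n + c) / 2 : ℕ) : ℝ) + 2 := by exact_mod_cast hnat
    nlinarith
  · filter_upwards [eventually_ge_atTop 1] with n hn
    have hn' : (0:ℝ) < n := by exact_mod_cast hn
    rw [div_le_iff₀ hn']
    have hnat : 2 * ((n + c) / 2) ≤ n + 2 := by omega
    have : 2 * (((n + c) / 2 : ℕ) : ℝ) ≤ (n : ℝ) + 2 := by exact_mod_cast hnat
    have hinv : (1 / (n:ℝ)) * n = 1 := by field_simp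
    nlinarith [hinv]

lemma aux_div2_atTop (c : ℕ) : Tendsto (fun n : ℕ => (n + c) / 2) atTop atTop := by
  refine tendsto_atTop.2 fun b => ?_
  filter_upwards [eventually_ge_atTop (2 * b)] with n hn
  omega

lemma aux_parity_split (w : ℕ → ℝ) (n : ℕ) :
    ∑ i ∈ range n, w i
      = (∑ j ∈ range ((n + 1) / 2), w (2 * j)) + ∑ j ∈ range (n / 2), w (2 * j + 1) := by
  induction n with
  | zero => simp
  | succ n ih =>
    rw [sum_range_succ, ih]
    rcases Nat.even_or_odd n with ⟨m, hm⟩ | ⟨m, hm⟩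
    · subst hm
      rw [show (m + m + 1 + 1) / 2 = m + 1 by omega, show (m + m + 1) / 2 = m by omega,
        show (m + m) / 2 = m by omega, sum_range_succ, show 2 * m = m + m by ring]
      ring
    · subst hm
      rw [show (2 * m + 1 + 1 + 1) / 2 = m + 1 by omega, show (2 * m + 1 + 1) / 2 = m + 1 by omega,
        show (2 * m + 1) / 2 = m by omega, sum_range_succ (fun j => w (2 * j + 1)) m]
      ring

lemma aux_parity (w : ℕ → ℝ) (L : ℝ)
    (he : Tendsto (fun n : ℕ => (∑ i ∈ range n, w (2 * i)) / n) atTop (𝓝 L))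
    (ho : Tendsto (fun n : ℕ => (∑ i ∈ range n, w (2 * i + 1)) / n) atTop (𝓝 L)) :
    Tendsto (fun n : ℕ => (∑ i ∈ range n, w i) / n) atTop (𝓝 L) := by
  have t1 : Tendsto (fun n : ℕ =>
      ((∑ i ∈ range ((n + 1) / 2), w (2 * i)) / (((n + 1) / 2 : ℕ) : ℝ))
        * ((((n + 1) / 2 : ℕ) : ℝ) / n)) atTop (𝓝 (L * (1 / 2))) :=
    (he.comp (aux_div2_atTop 1)).mul (aux_halfdiv 1 le_rfl)
  have t2 : Tendsto (fun n : ℕ =>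
      ((∑ i ∈ range (n / 2), w (2 * i + 1)) / ((n / 2 : ℕ) : ℝ))
        * (((n / 2 : ℕ) : ℝ) / n)) atTop (𝓝 (L * (1 / 2))) := by
    have := (ho.comp (aux_div2_atTop 0)).mul (aux_halfdiv 0 (by norm_num))
    simpa using this
  have hsum := t1.add t2
  rw [show L * (1 / 2) + L * (1 / 2) = L by ring] at hsum
  refine hsum.congr' ?_
  filter_upwards [eventually_ge_atTop 2] with n hn
  have ha : (0:ℝ) < (((n + 1) / 2 : ℕ) : ℝ) := by
    have : 1 ≤ (n + 1) / 2 := by omega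
    exact_mod_cast Nat.lt_of_lt_of_le Nat.zero_lt_one this
  have hb : (0:ℝ) < ((n / 2 : ℕ) : ℝ) := by
    have : 1 ≤ n / 2 := by omega
    exact_mod_cast Nat.lt_of_lt_of_le Nat.zero_lt_one this
  have hn' : (0:ℝ) < n := by positivity
  rw [aux_parity_split w n]
  field_simp

/-- Lemma 4 of the paper (longest chain extension attack): with i.i.d. key-block indicators
`(X i)_{i ≥ 1}` (`P(X i = 1) = α`, `P(X i = 0) = β = 1-α`), pair indicators
`K i = 1_{(X i, X (i+1)) = (0,1)}`, and i.i.d. exponential inter-block times `(Y i)_{i ≥ 1}`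
of rate `f` independent of the `X`'s, the selfish miner's relative revenue
`u_m = Σ(αvY_iR_t - (1-r)ρvK_iY_iR_t) / Σ(vY_iR_t - ρvK_iY_iR_t)` converges a.s. to
`(α - (1-r)αβρ)/(1 - αβρ)`. -/
theorem stmt6 {Ω : Type*} [MeasurableSpace Ω] (P : Measure Ω) [IsProbabilityMeasure P]
    (α β f r ρ v Rt : ℝ) (hα0 : 0 < α) (hα1 : α < 1) (hβ : β = 1 - α) (hf : 0 < f)
    (hr0 : 0 ≤ r) (hr1 : r ≤ 1) (hρ0 : 0 ≤ ρ) (hρ1 : ρ ≤ 1)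
    (hv : 0 < v) (hRt : 0 < Rt) (hαβρ : α * β * ρ < 1)
    (X Y : ℕ → Ω → ℝ) (hXmeas : ∀ i, Measurable (X i)) (hYmeas : ∀ i, Measurable (Y i))
    (hindep : iIndepFun
      (Sum.elim (fun i : ℕ => X (i + 1)) (fun i : ℕ => Y (i + 1))) P)
    (h1 : ∀ i, 1 ≤ i → P {ω | X i ω = 1} = ENNReal.ofReal α)
    (h0 : ∀ i, 1 ≤ i → P {ω | X i ω = 0} = ENNReal.ofReal β)
    (hY : ∀ i, 1 ≤ i → P.map (Y i) = expMeasure f)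
    (K : ℕ → Ω → ℝ)
    (hK : ∀ i ω, K i ω = if X i ω = 0 ∧ X (i + 1) ω = 1 then (1 : ℝ) else 0)
    (u : ℕ → Ω → ℝ)
    (hu : ∀ m ω, u m ω =
      (∑ i ∈ Finset.Icc 1 (m - 1),
        (α * v * Y i ω * Rt - (1 - r) * ρ * v * K i ω * Y i ω * Rt)) /
      (∑ i ∈ Finset.Icc 1 (m - 1), (v * Y i ω * Rt - ρ * v * K i ω * Y i ω * Rt))) :
    ∀ᵐ ω ∂P, Tendsto (fun m : ℕ => u m ω) atTop
      (nhds ((α - (1 - r) * α * β * ρ) / (1 - α * β * ρ))) := by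
  classical
  have hβ0 : 0 < β := by rw [hβ]; linarith
  set Z : ℕ ⊕ ℕ → Ω → ℝ := Sum.elim (fun i : ℕ => X (i + 1)) (fun i : ℕ => Y (i + 1)) with hZ
  have hZmeas : ∀ s, Measurable (Z s) := by rintro (i | i); exacts [hXmeas (i + 1), hYmeas (i + 1)]
  -- Y integrability and mean
  have hYint : ∀ i : ℕ, Integrable (Y (i + 1)) P := by
    intro i
    have hmap := hY (i + 1) (by omega)
    have hid : Integrable (fun x : ℝ => x) (P.map (Y (i + 1))) := by
      rw [hmap]; exact aux_exp_integrable f hf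
    exact (integrable_map_measure measurable_id.aestronglyMeasurable
      (hYmeas (i + 1)).aemeasurable).mp hid
  have hYmean : ∀ i : ℕ, ∫ ω, Y (i + 1) ω ∂P = 1 / f := by
    intro i
    have hmap := hY (i + 1) (by omega)
    have := integral_map (φ := Y (i + 1)) (hYmeas (i + 1)).aemeasurable
      (measurable_id.aestronglyMeasurable :
        AEStronglyMeasurable (fun x : ℝ => x) (P.map (Y (i + 1))))
    rw [hmap] at this
    simp only [id_eq] at this
    rw [← this]
    exact aux_exp_integral f hf
  -- X marginals
  have hXlaw : ∀ i : ℕ, P.map (X (i + 1))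
      = ENNReal.ofReal β • Measure.dirac (0:ℝ) + ENNReal.ofReal α • Measure.dirac (1:ℝ) :=
    fun i => aux_bernoulli_law P α β hα0.le hβ0.le (by rw [hβ]; ring) (X (i + 1))
      (hXmeas (i + 1)) (h1 (i + 1) (by omega)) (h0 (i + 1) (by omega))
  have hXlaw2 : ∀ i : ℕ, P.map (X (i + 2))
      = ENNReal.ofReal β • Measure.dirac (0:ℝ) + ENNReal.ofReal α • Measure.dirac (1:ℝ) :=
    fun i => aux_bernoulli_law P α β hα0.le hβ0.le (by rw [hβ]; ring) (X (i + 2))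
      (hXmeas (i + 2)) (h1 (i + 2) (by omega)) (h0 (i + 2) (by omega))
  -- the product variables
  set W : ℕ → Ω → ℝ :=
    fun a ω => (if X (a + 1) ω = 0 ∧ X (a + 2) ω = 1 then (1:ℝ) else 0) * Y (a + 1) ω with hWdef
  have hsetmeas : ∀ a : ℕ, MeasurableSet {ω | X (a + 1) ω = 0 ∧ X (a + 2) ω = 1} :=
    fun a => ((hXmeas (a + 1)) (measurableSet_singleton 0)).inter
      ((hXmeas (a + 2)) (measurableSet_singleton 1))
  have hWmeas : ∀ a, Measurable (W a) := fun a =>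
    (Measurable.ite (hsetmeas a) measurable_const measurable_const).mul (hYmeas (a + 1))
  have hWbd : ∀ a ω, ‖W a ω‖ ≤ ‖Y (a + 1) ω‖ := by
    intro a ω
    simp only [hWdef]
    by_cases h : X (a + 1) ω = 0 ∧ X (a + 2) ω = 1 <;> simp [h]
  have hWint : ∀ a, Integrable (W a) P := fun a =>
    Integrable.mono (hYint a) (hWmeas a).aestronglyMeasurable
      (Filter.Eventually.of_forall (hWbd a))
  -- identical distribution of the W's
  set g : ℝ × ℝ × ℝ → ℝ := fun q => (if q.1 = 0 ∧ q.2.1 = 1 then (1:ℝ) else 0) * q.2.2 with hgdef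
  have hgset : MeasurableSet {q : ℝ × ℝ × ℝ | q.1 = 0 ∧ q.2.1 = 1} :=
    (measurable_fst (measurableSet_singleton 0)).inter
      ((measurable_fst.comp measurable_snd) (measurableSet_singleton 1))
  have hgmeas : Measurable g :=
    (Measurable.ite hgset measurable_const measurable_const).mul
      (measurable_snd.comp measurable_snd)
  set T : ℕ → Ω → ℝ × ℝ × ℝ := fun a ω => (X (a + 1) ω, (X (a + 2) ω, Y (a + 1) ω)) with hTdef
  have hTmeas : ∀ a, Measurable (T a) :=
    fun a => (hXmeas _).prodMk ((hXmeas _).prodMk (hYmeas _))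
  have hWT : ∀ a, W a = g ∘ T a := fun a => rfl
  have hTriple : ∀ a : ℕ, P.map (T a)
      = (P.map (X (a + 1))).prod ((P.map (X (a + 2))).prod (P.map (Y (a + 1)))) := by
    intro a
    have hQ : IndepFun (X (a + 2)) (Y (a + 1)) P :=
      hindep.indepFun (show (Sum.inl (a + 1) : ℕ ⊕ ℕ) ≠ Sum.inr a by simp)
    have hQlaw : P.map (fun ω => (X (a + 2) ω, Y (a + 1) ω))
        = (P.map (X (a + 2))).prod (P.map (Y (a + 1))) :=
      (indepFun_iff_map_prod_eq_prod_map_map (hXmeas _).aemeasurable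
        (hYmeas _).aemeasurable).mp hQ
    have hOut : IndepFun (X (a + 1)) (fun ω => (X (a + 2) ω, Y (a + 1) ω)) P := by
      have h := hindep.indepFun_prodMk hZmeas (Sum.inl (a + 1)) (Sum.inr a) (Sum.inl a)
        (by simp) (by simp)
      exact h.symm
    have h2 := (indepFun_iff_map_prod_eq_prod_map_map (hXmeas (a + 1)).aemeasurable
      ((hXmeas (a + 2)).prodMk (hYmeas (a + 1))).aemeasurable).mp hOut
    rw [show T a = fun ω => (X (a + 1) ω, (X (a + 2) ω, Y (a + 1) ω)) from rfl, h2, hQlaw]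
  have hWident : ∀ a b : ℕ, IdentDistrib (W a) (W b) P P := by
    intro a b
    have hTid : IdentDistrib (T a) (T b) P P :=
      ⟨(hTmeas a).aemeasurable, (hTmeas b).aemeasurable, by
        rw [hTriple a, hTriple b, hXlaw a, hXlaw b, hXlaw2 a, hXlaw2 b,
          hY (a + 1) (by omega), hY (b + 1) (by omega)]⟩
    rw [hWT a, hWT b]
    exact hTid.comp hgmeas
  -- independence of the W's at distance ≥ 2
  have hWindep : ∀ a b : ℕ, a + 2 ≤ b → IndepFun (W a) (W b) P := by
    intro a b hab
    set S : Finset (ℕ ⊕ ℕ) := {Sum.inl a, Sum.inl (a + 1), Sum.inr a} with hS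
    set S' : Finset (ℕ ⊕ ℕ) := {Sum.inl b, Sum.inl (b + 1), Sum.inr b} with hS'
    have hdisj : Disjoint S S' := by
      rw [Finset.disjoint_left]
      rintro x hx hx'
      simp only [hS, hS', Finset.mem_insert, Finset.mem_singleton] at hx hx'
      rcases hx with h | h | h <;> rcases hx' with h' | h' | h' <;>
        (subst h; first
          | (injection h' with h''; omega)
          | (exact absurd h' (by simp)))
    have hfin := hindep.indepFun_finset S S' hdisj hZmeas
    have e1a : (Sum.inl a : ℕ ⊕ ℕ) ∈ S := by simp [hS]
    have e2a : (Sum.inl (a + 1) : ℕ ⊕ ℕ) ∈ S := by simp [hS]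
    have e3a : (Sum.inr a : ℕ ⊕ ℕ) ∈ S := by simp [hS]
    have e1b : (Sum.inl b : ℕ ⊕ ℕ) ∈ S' := by simp [hS']
    have e2b : (Sum.inl (b + 1) : ℕ ⊕ ℕ) ∈ S' := by simp [hS']
    have e3b : (Sum.inr b : ℕ ⊕ ℕ) ∈ S' := by simp [hS']
    set φ : (S → ℝ) → ℝ := fun h =>
      (if h ⟨Sum.inl a, e1a⟩ = 0 ∧ h ⟨Sum.inl (a + 1), e2a⟩ = 1 then (1:ℝ) else 0)
        * h ⟨Sum.inr a, e3a⟩ with hφ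
    set ψ : (S' → ℝ) → ℝ := fun h =>
      (if h ⟨Sum.inl b, e1b⟩ = 0 ∧ h ⟨Sum.inl (b + 1), e2b⟩ = 1 then (1:ℝ) else 0)
        * h ⟨Sum.inr b, e3b⟩ with hψ
    have hφmeas : Measurable φ := by
      have hs : MeasurableSet {h : S → ℝ | h ⟨Sum.inl a, e1a⟩ = 0 ∧ h ⟨Sum.inl (a + 1), e2a⟩ = 1} :=
        ((measurable_pi_apply _) (measurableSet_singleton 0)).inter
          ((measurable_pi_apply _) (measurableSet_singleton 1))
      exact (Measurable.ite hs measurable_const measurable_const).mul (measurable_pi_apply _)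
    have hψmeas : Measurable ψ := by
      have hs : MeasurableSet {h : S' → ℝ | h ⟨Sum.inl b, e1b⟩ = 0 ∧ h ⟨Sum.inl (b + 1), e2b⟩ = 1} :=
        ((measurable_pi_apply _) (measurableSet_singleton 0)).inter
          ((measurable_pi_apply _) (measurableSet_singleton 1))
      exact (Measurable.ite hs measurable_const measurable_const).mul (measurable_pi_apply _)
    have := hfin.comp hφmeas hψmeas
    exact this
  -- integrability and means of the indicator functions
  have hI0 : ∀ a : ℕ, Integrable (fun ω => if X (a + 1) ω = 0 then (1:ℝ) else 0) P ∧
      ∫ ω, (if X (a + 1) ω = 0 then (1:ℝ) else 0) ∂P = β := by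
    intro a
    have hms : MeasurableSet {ω | X (a + 1) ω = 0} := (hXmeas (a + 1)) (measurableSet_singleton 0)
    have heq : (fun ω => if X (a + 1) ω = 0 then (1:ℝ) else 0)
        = Set.indicator {ω | X (a + 1) ω = 0} (fun _ => (1:ℝ)) := by
      funext ω; simp [Set.indicator_apply, Set.mem_setOf_eq]
    constructor
    · rw [heq]; exact (integrable_const (1:ℝ)).indicator hms
    · rw [heq, integral_indicator_const (1:ℝ) hms, measureReal_def, h0 (a + 1) (by omega), smul_eq_mul, mul_one,
        ENNReal.toReal_ofReal hβ0.le]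
  have hI1 : ∀ a : ℕ, Integrable (fun ω => if X (a + 2) ω = 1 then (1:ℝ) else 0) P ∧
      ∫ ω, (if X (a + 2) ω = 1 then (1:ℝ) else 0) ∂P = α := by
    intro a
    have hms : MeasurableSet {ω | X (a + 2) ω = 1} := (hXmeas (a + 2)) (measurableSet_singleton 1)
    have heq : (fun ω => if X (a + 2) ω = 1 then (1:ℝ) else 0)
        = Set.indicator {ω | X (a + 2) ω = 1} (fun _ => (1:ℝ)) := by
      funext ω; simp [Set.indicator_apply, Set.mem_setOf_eq]
    constructor
    · rw [heq]; exact (integrable_const (1:ℝ)).indicator hms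
    · rw [heq, integral_indicator_const (1:ℝ) hms, measureReal_def, h1 (a + 2) (by omega), smul_eq_mul, mul_one,
        ENNReal.toReal_ofReal hα0.le]
  have hKint : ∀ a : ℕ,
      Integrable (fun ω => if X (a + 1) ω = 0 ∧ X (a + 2) ω = 1 then (1:ℝ) else 0) P := by
    intro a
    have heq : (fun ω => if X (a + 1) ω = 0 ∧ X (a + 2) ω = 1 then (1:ℝ) else 0)
        = Set.indicator {ω | X (a + 1) ω = 0 ∧ X (a + 2) ω = 1} (fun _ => (1:ℝ)) := by
      funext ω; simp [Set.indicator_apply, Set.mem_setOf_eq]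
    rw [heq]; exact (integrable_const (1:ℝ)).indicator (hsetmeas a)
  have hprodind : ∀ a : ℕ, (fun ω => if X (a + 1) ω = 0 ∧ X (a + 2) ω = 1 then (1:ℝ) else 0)
      = (fun ω => if X (a + 1) ω = 0 then (1:ℝ) else 0)
        * (fun ω => if X (a + 2) ω = 1 then (1:ℝ) else 0) := by
    intro a; funext ω; simp only [Pi.mul_apply]
    by_cases hA : X (a + 1) ω = 0 <;> by_cases hB : X (a + 2) ω = 1 <;> simp [hA, hB]
  have hKmean : ∀ a : ℕ,
      ∫ ω, (if X (a + 1) ω = 0 ∧ X (a + 2) ω = 1 then (1:ℝ) else 0) ∂P = β * α := by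
    intro a
    have hXX : IndepFun (X (a + 1)) (X (a + 2)) P :=
      hindep.indepFun (show (Sum.inl a : ℕ ⊕ ℕ) ≠ Sum.inl (a + 1) by simp)
    have hm0 : Measurable (fun x : ℝ => if x = 0 then (1:ℝ) else 0) :=
      Measurable.ite (measurableSet_eq) measurable_const measurable_const
    have hm1 : Measurable (fun x : ℝ => if x = 1 then (1:ℝ) else 0) :=
      Measurable.ite (measurableSet_eq) measurable_const measurable_const
    have hind : IndepFun (fun ω => if X (a + 1) ω = 0 then (1:ℝ) else 0)
        (fun ω => if X (a + 2) ω = 1 then (1:ℝ) else 0) P := hXX.comp hm0 hm1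
    rw [hprodind a, hind.integral_mul_eq_mul_integral (hI0 a).1.aestronglyMeasurable (hI1 a).1.aestronglyMeasurable, (hI0 a).2, (hI1 a).2]
  have hWmean : ∀ a : ℕ, ∫ ω, W a ω ∂P = β * α * (1 / f) := by
    intro a
    have hpair : IndepFun (fun ω => (X (a + 1) ω, X (a + 2) ω)) (Y (a + 1)) P := by
      have h := hindep.indepFun_prodMk hZmeas (Sum.inl a) (Sum.inl (a + 1)) (Sum.inr a)
        (by simp) (by simp)
      exact h
    have hm : Measurable (fun p : ℝ × ℝ => if p.1 = 0 ∧ p.2 = 1 then (1:ℝ) else 0) := by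
      have hs : MeasurableSet {p : ℝ × ℝ | p.1 = 0 ∧ p.2 = 1} :=
        (measurable_fst (measurableSet_singleton 0)).inter
          (measurable_snd (measurableSet_singleton 1))
      exact Measurable.ite hs measurable_const measurable_const
    have hindY : IndepFun (fun ω => if X (a + 1) ω = 0 ∧ X (a + 2) ω = 1 then (1:ℝ) else 0)
        (Y (a + 1)) P := hpair.comp hm measurable_id
    have heq : W a = (fun ω => if X (a + 1) ω = 0 ∧ X (a + 2) ω = 1 then (1:ℝ) else 0)
        * (Y (a + 1)) := rfl
    rw [heq, hindY.integral_mul_eq_mul_integral (hKint a).aestronglyMeasurable (hYint a).aestronglyMeasurable, hKmean a, hYmean a]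
  -- strong law of large numbers for the Y's
  have hSY : ∀ᵐ ω ∂P, Tendsto (fun n : ℕ => (∑ i ∈ range n, Y (i + 1) ω) / n)
      atTop (𝓝 (1 / f)) := by
    have hpair : Pairwise (Function.onFun (IndepFun · · P) fun i : ℕ => Y (i + 1)) := by
      intro i j hij
      exact hindep.indepFun (show (Sum.inr i : ℕ ⊕ ℕ) ≠ Sum.inr j by simpa using hij)
    have hident : ∀ i : ℕ, IdentDistrib (fun ω => Y (i + 1) ω) (fun ω => Y (0 + 1) ω) P P :=
      fun i => ⟨(hYmeas _).aemeasurable, (hYmeas _).aemeasurable, by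
        rw [hY (i + 1) (by omega), hY (0 + 1) (by omega)]⟩
    have h := strong_law_ae_real (fun i => Y (i + 1)) (hYint 0) hpair hident
    rw [show (∫ ω, Y (0 + 1) ω ∂P) = 1 / f from hYmean 0] at h
    exact h
  -- strong law for the even and odd subsequences of W
  have hVe : ∀ᵐ ω ∂P, Tendsto (fun n : ℕ => (∑ i ∈ range n, W (2 * i) ω) / n)
      atTop (𝓝 (β * α * (1 / f))) := by
    have hpair : Pairwise (Function.onFun (IndepFun · · P) fun i : ℕ => W (2 * i)) := by
      intro i j hij
      rcases lt_or_gt_of_ne hij with h' | h'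
      · exact hWindep (2 * i) (2 * j) (by omega)
      · exact (hWindep (2 * j) (2 * i) (by omega)).symm
    have h := strong_law_ae_real (fun i => W (2 * i)) (hWint (2 * 0))
      hpair (fun i => hWident (2 * i) (2 * 0))
    rw [show (∫ ω, W (2 * 0) ω ∂P) = β * α * (1 / f) from hWmean (2 * 0)] at h
    exact h
  have hVo : ∀ᵐ ω ∂P, Tendsto (fun n : ℕ => (∑ i ∈ range n, W (2 * i + 1) ω) / n)
      atTop (𝓝 (β * α * (1 / f))) := by
    have hpair : Pairwise (Function.onFun (IndepFun · · P) fun i : ℕ => W (2 * i + 1)) := by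
      intro i j hij
      rcases lt_or_gt_of_ne hij with h' | h'
      · exact hWindep (2 * i + 1) (2 * j + 1) (by omega)
      · exact (hWindep (2 * j + 1) (2 * i + 1) (by omega)).symm
    have h := strong_law_ae_real (fun i => W (2 * i + 1)) (hWint (2 * 0 + 1))
      hpair (fun i => hWident (2 * i + 1) (2 * 0 + 1))
    rw [show (∫ ω, W (2 * 0 + 1) ω ∂P) = β * α * (1 / f) from hWmean (2 * 0 + 1)] at h
    exact h
  have hSW : ∀ᵐ ω ∂P, Tendsto (fun n : ℕ => (∑ i ∈ range n, W i ω) / n)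
      atTop (𝓝 (β * α * (1 / f))) := by
    filter_upwards [hVe, hVo] with ω h1' h2'
    exact aux_parity (fun i => W i ω) _ h1' h2'
  -- final assembly
  have hden1 : (1:ℝ) - α * β * ρ ≠ 0 := ne_of_gt (by linarith)
  filter_upwards [hSY, hSW] with ω hAlim hBlim
  have hA' : Tendsto (fun m : ℕ => (∑ i ∈ range (m - 1), Y (i + 1) ω) / ((m - 1 : ℕ) : ℝ))
      atTop (𝓝 (1 / f)) := hAlim.comp (tendsto_sub_atTop_nat 1)
  have hB' : Tendsto (fun m : ℕ => (∑ i ∈ range (m - 1), W i ω) / ((m - 1 : ℕ) : ℝ))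
      atTop (𝓝 (β * α * (1 / f))) := hBlim.comp (tendsto_sub_atTop_nat 1)
  have hNlim : Tendsto (fun m : ℕ =>
      α * v * Rt * ((∑ i ∈ range (m - 1), Y (i + 1) ω) / ((m - 1 : ℕ) : ℝ))
        - (1 - r) * ρ * v * Rt * ((∑ i ∈ range (m - 1), W i ω) / ((m - 1 : ℕ) : ℝ)))
      atTop (𝓝 (α * v * Rt * (1 / f) - (1 - r) * ρ * v * Rt * (β * α * (1 / f)))) :=
    (hA'.const_mul _).sub (hB'.const_mul _)
  have hDlim : Tendsto (fun m : ℕ =>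
      v * Rt * ((∑ i ∈ range (m - 1), Y (i + 1) ω) / ((m - 1 : ℕ) : ℝ))
        - ρ * v * Rt * ((∑ i ∈ range (m - 1), W i ω) / ((m - 1 : ℕ) : ℝ)))
      atTop (𝓝 (v * Rt * (1 / f) - ρ * v * Rt * (β * α * (1 / f)))) :=
    (hA'.const_mul _).sub (hB'.const_mul _)
  have hD0 : v * Rt * (1 / f) - ρ * v * Rt * (β * α * (1 / f)) ≠ 0 := by
    have h' : v * Rt * (1 / f) - ρ * v * Rt * (β * α * (1 / f))
        = v * Rt * (1 / f) * (1 - α * β * ρ) := by ring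
    rw [h']
    apply ne_of_gt
    apply mul_pos (mul_pos (mul_pos hv hRt) (by positivity))
    linarith
  have hlim := hNlim.div hDlim hD0
  have hval : (α * v * Rt * (1 / f) - (1 - r) * ρ * v * Rt * (β * α * (1 / f)))
      / (v * Rt * (1 / f) - ρ * v * Rt * (β * α * (1 / f)))
      = (α - (1 - r) * α * β * ρ) / (1 - α * β * ρ) := by
    rw [div_eq_div_iff hD0 hden1]
    field_simp
  rw [hval] at hlim
  refine Tendsto.congr' ?_ hlim
  filter_upwards [eventually_ge_atTop 2] with m hm
  have hc : (((m - 1 : ℕ)) : ℝ) ≠ 0 := by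
    have h1' : (1:ℕ) ≤ m - 1 := by omega
    have h2' : (0:ℝ) < ((m - 1 : ℕ) : ℝ) := by exact_mod_cast Nat.lt_of_lt_of_le Nat.zero_lt_one h1'
    exact ne_of_gt h2'
  have hKW : ∀ i : ℕ, K (i + 1) ω * Y (i + 1) ω = W i ω := by
    intro i
    rw [hK (i + 1) ω]
  have key : ∀ c1 c2 : ℝ,
      (∑ i ∈ Finset.Icc 1 (m - 1), (c1 * Y i ω * Rt - c2 * K i ω * Y i ω * Rt))
      = c1 * Rt * (∑ i ∈ range (m - 1), Y (i + 1) ω)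
        - c2 * Rt * (∑ i ∈ range (m - 1), W i ω) := by
    intro c1 c2
    rw [show Finset.Icc 1 (m - 1) = Finset.Ico 1 m by
        rw [← Finset.Ico_add_one_right_eq_Icc]; congr 1; omega,
      Finset.sum_Ico_eq_sum_range, Finset.mul_sum, Finset.mul_sum, ← Finset.sum_sub_distrib]
    apply Finset.sum_congr rfl
    intro i _
    rw [show (1:ℕ) + i = i + 1 by omega, ← hKW i]
    ring
  have hu' : u m ω = (α * v * Rt * (∑ i ∈ range (m - 1), Y (i + 1) ω)
        - (1 - r) * ρ * v * Rt * (∑ i ∈ range (m - 1), W i ω))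
      / (v * Rt * (∑ i ∈ range (m - 1), Y (i + 1) ω)
        - ρ * v * Rt * (∑ i ∈ range (m - 1), W i ω)) := by
    rw [hu m ω, key (α * v) ((1 - r) * ρ * v), key v (ρ * v)]
  rw [hu']
  simp only [Pi.div_apply]
  set SY := ∑ i ∈ range (m - 1), Y (i + 1) ω with hSYdef
  set SW := ∑ i ∈ range (m - 1), W i ω with hSWdef
  set c : ℝ := ((m - 1 : ℕ) : ℝ) with hcdef
  have e1 : α * v * Rt * (SY / c) - (1 - r) * ρ * v * Rt * (SW / c)
      = (α * v * Rt * SY - (1 - r) * ρ * v * Rt * SW) / c := by field_simp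
  have e2 : v * Rt * (SY / c) - ρ * v * Rt * (SW / c)
      = (v * Rt * SY - ρ * v * Rt * SW) / c := by field_simp
  rw [e1, e2, div_div_div_comm, div_self hc, div_one]
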